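/- Let n ≥ 2 and let S_n be the n×n shift matrix. For every integer k with 1 ≤ k ≤ ⌊(n+1)/2⌋, the rank-k numerical range Λ_k(S_n) equals the closed disc {z ∈ ℂ : |z| ≤ cos(kπ/(n+1))}. -/

import Mathlib

open Matrix

noncomputable section

/-- The `n × n` nilpotent shift matrix: `(S_n)_{ij} = 1` if `i = j + 1`, else `0`. -/
def shiftMatrix (n : ℕ) : Matrix (Fin n) (Fin n) ℂ :=
  Matrix.of fun i j => if (i : ℕ) = (j : ℕ) + 1 then 1 else 0

/-- The rank-`k` numerical range of a square complex matrix `T`: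
all `λ` such that `P * T * P = λ • P` for some orthogonal projection `P` of rank `k`. -/
def rankNumRange {m : Type*} [Fintype m] (k : ℕ) (T : Matrix m m ℂ) : Set ℂ :=
  {lam : ℂ | ∃ P : Matrix m m ℂ,
    P * P = P ∧ Pᴴ = P ∧ P.rank = k ∧ P * T * P = lam • P}

namespace ShiftAux

open Finset

lemma shift_apply {n : ℕ} (i j : Fin n) :
    shiftMatrix n i j = if (i : ℕ) = (j : ℕ) + 1 then 1 else 0 := rfl

lemma shiftT_apply {n : ℕ} (i j : Fin n) :
    (shiftMatrix n)ᴴ i j = if (j : ℕ) = (i : ℕ) + 1 then 1 else 0 := by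
  simp only [Matrix.conjTranspose_apply, shift_apply]
  split <;> simp

/-- Row sums against the shift matrix. -/
lemma sum_shift_row {n : ℕ} (w : ℕ → ℂ) (hw0 : w 0 = 0) (i : Fin n) :
    ∑ j : Fin n, (if (i : ℕ) = (j : ℕ) + 1 then (1:ℂ) else 0) * w ((j : ℕ) + 1) = w i := by
  rcases Nat.eq_zero_or_pos (i : ℕ) with hi | hi
  · rw [hi, hw0]
    apply Finset.sum_eq_zero
    intro j _
    rw [if_neg (by omega), zero_mul]
  · have hij : (i : ℕ) - 1 < n := by omega
    rw [Finset.sum_eq_single ⟨(i : ℕ) - 1, hij⟩]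
    · rw [if_pos (by simp; omega), one_mul]
      congr 1
      simp; omega
    · intro j _ hj
      rw [if_neg, zero_mul]
      intro h
      exact hj (Fin.ext (by simp; omega))
    · intro h; exact absurd (Finset.mem_univ _) h

/-- Row sums against the transposed shift matrix. -/
lemma sum_shiftT_row {n : ℕ} (w : ℕ → ℂ) (hwN : w (n + 1) = 0) (i : Fin n) :
    ∑ j : Fin n, (if (j : ℕ) = (i : ℕ) + 1 then (1:ℂ) else 0) * w ((j : ℕ) + 1) = w ((i : ℕ) + 2) := by
  rcases lt_or_ge ((i : ℕ) + 1) n with hi | hi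
  · rw [Finset.sum_eq_single ⟨(i : ℕ) + 1, hi⟩]
    · rw [if_pos (by simp), one_mul]
    · intro j _ hj
      rw [if_neg, zero_mul]
      intro h
      exact hj (Fin.ext (by simpa using h))
    · intro h; exact absurd (Finset.mem_univ _) h
  · have hin : (i : ℕ) = n - 1 := by omega
    have h2 : (i : ℕ) + 2 = n + 1 := by omega
    rw [h2, hwN]
    apply Finset.sum_eq_zero
    intro j _
    rw [if_neg (by omega), zero_mul]

/-- Generic witness criterion for membership in the rank-k numerical range. -/
theorem mem_of_witness {n k : ℕ} (X : Matrix (Fin n) (Fin k) ℂ) (r : ℂ)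
    (hG : IsUnit (Xᴴ * X).det)
    (hXS : Xᴴ * shiftMatrix n * X = r • (Xᴴ * X)) :
    r ∈ rankNumRange k (shiftMatrix n) := by
  set G := Xᴴ * X with hGdef
  have hGinv : G⁻¹ * G = 1 := Matrix.nonsing_inv_mul G hG
  have hGinv' : G * G⁻¹ = 1 := Matrix.mul_nonsing_inv G hG
  refine ⟨X * G⁻¹ * Xᴴ, ?_, ?_, ?_, ?_⟩
  · -- idempotent
    have h1 : Xᴴ * (X * (G⁻¹ * Xᴴ)) = Xᴴ := by
      rw [← Matrix.mul_assoc Xᴴ X, ← hGdef, ← Matrix.mul_assoc, hGinv', Matrix.one_mul]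
    calc (X * G⁻¹ * Xᴴ) * (X * G⁻¹ * Xᴴ)
        = X * (G⁻¹ * (Xᴴ * (X * (G⁻¹ * Xᴴ)))) := by simp only [Matrix.mul_assoc]
      _ = X * G⁻¹ * Xᴴ := by rw [h1, Matrix.mul_assoc]
  · -- hermitian
    have hGH : Gᴴ = G := by
      rw [hGdef, Matrix.conjTranspose_mul, Matrix.conjTranspose_conjTranspose]
    rw [Matrix.conjTranspose_mul, Matrix.conjTranspose_mul,
      Matrix.conjTranspose_conjTranspose, Matrix.conjTranspose_nonsing_inv, hGH,
      Matrix.mul_assoc]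
  · -- rank
    have hcard : Fintype.card (Fin k) = k := Fintype.card_fin k
    have hGrank : G.rank = k := by rw [Matrix.rank_of_isUnit G ((Matrix.isUnit_iff_isUnit_det G).mpr hG), hcard]
    have hPX : (X * G⁻¹ * Xᴴ) * X = X := by
      calc (X * G⁻¹ * Xᴴ) * X = X * (G⁻¹ * (Xᴴ * X)) := by simp only [Matrix.mul_assoc]
        _ = X * (G⁻¹ * G) := by rw [← hGdef]
        _ = X := by rw [hGinv, Matrix.mul_one]
    have hle : (X * G⁻¹ * Xᴴ).rank ≤ k := by
      calc (X * G⁻¹ * Xᴴ).rank ≤ (X * G⁻¹).rank := Matrix.rank_mul_le_left _ _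
        _ ≤ X.rank := Matrix.rank_mul_le_left _ _
        _ ≤ Fintype.card (Fin k) := Matrix.rank_le_card_width X
        _ = k := hcard
    have hge : k ≤ (X * G⁻¹ * Xᴴ).rank := by
      have h'' : Xᴴ * ((X * G⁻¹ * Xᴴ) * X) = G := by rw [hPX]
      calc k = G.rank := hGrank.symm
        _ = (Xᴴ * ((X * G⁻¹ * Xᴴ) * X)).rank := by rw [h'']
        _ ≤ ((X * G⁻¹ * Xᴴ) * X).rank := Matrix.rank_mul_le_right _ _
        _ ≤ (X * G⁻¹ * Xᴴ).rank := Matrix.rank_mul_le_left _ _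
    omega
  · -- compression identity
    calc (X * G⁻¹ * Xᴴ) * shiftMatrix n * (X * G⁻¹ * Xᴴ)
        = X * (G⁻¹ * ((Xᴴ * shiftMatrix n * X) * (G⁻¹ * Xᴴ))) := by simp only [Matrix.mul_assoc]
      _ = X * (G⁻¹ * ((r • G) * (G⁻¹ * Xᴴ))) := by rw [hXS]
      _ = r • (X * G⁻¹ * Xᴴ) := by
          rw [Matrix.smul_mul, ← Matrix.mul_assoc G, hGinv', Matrix.one_mul,
            Matrix.mul_smul, Matrix.mul_smul, Matrix.mul_assoc]

/-- Rotation invariance. -/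
theorem rot_mem {n k : ℕ} {z : ℂ} (θ : ℝ) (hz : z ∈ rankNumRange k (shiftMatrix n)) :
    Complex.exp (θ * Complex.I) * z ∈ rankNumRange k (shiftMatrix n) := by
  obtain ⟨P, hP2, hPH, hPr, hPS⟩ := hz
  set d : Fin n → ℂ := fun j => Complex.exp (-θ * Complex.I * ((j : ℕ) + 1)) with hd
  set D := Matrix.diagonal d with hD
  have hdd : ∀ j, (starRingEnd ℂ) (d j) * d j = 1 := by
    intro j
    rw [hd, ← Complex.exp_conj, ← Complex.exp_add]
    simp only [_root_.map_mul, map_neg, map_add, _root_.map_one, map_natCast,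
      Complex.conj_ofReal, Complex.conj_I]
    rw [show -(θ:ℂ) * -Complex.I * ((j : ℕ) + 1) + -θ * Complex.I * ((j : ℕ) + 1) = 0 by
      push_cast; ring]
    exact Complex.exp_zero
  have hDH : Dᴴ = Matrix.diagonal (fun j => (starRingEnd ℂ) (d j)) := by
    rw [hD, Matrix.diagonal_conjTranspose]; rfl
  have hDHD : Dᴴ * D = 1 := by
    rw [hDH, hD, Matrix.diagonal_mul_diagonal]
    have : (fun j => (starRingEnd ℂ) (d j) * d j) = fun _ => (1 : ℂ) := funext hdd
    rw [this, Matrix.diagonal_one]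
  have hDDH : D * Dᴴ = 1 := mul_eq_one_comm.mp hDHD
  have hconj : ∀ j, (starRingEnd ℂ) (d j) = Complex.exp (θ * Complex.I * ((j : ℕ) + 1)) := by
    intro j
    rw [hd, ← Complex.exp_conj]
    congr 1
    simp only [_root_.map_mul, map_neg, Complex.conj_ofReal, Complex.conj_I, map_add, _root_.map_one,
      map_natCast]
    ring
  have hDSD : Dᴴ * shiftMatrix n * D = Complex.exp (θ * Complex.I) • shiftMatrix n := by
    ext i j
    have hentry : (Dᴴ * shiftMatrix n * D) i j
        = (starRingEnd ℂ) (d i) * shiftMatrix n i j * d j := by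
      rw [Matrix.mul_diagonal, hDH, Matrix.diagonal_mul]
    rw [hentry, Matrix.smul_apply, smul_eq_mul]
    simp only [shift_apply]
    by_cases h : (i : ℕ) = (j : ℕ) + 1
    · rw [if_pos h, hconj, hd, mul_one, mul_one, ← Complex.exp_add]
      congr 1
      have hc : ((i : ℕ) : ℂ) = ((j : ℕ) : ℂ) + 1 := by exact_mod_cast h
      rw [hc]; push_cast; ring
    · rw [if_neg h, mul_zero, zero_mul, mul_zero]
  refine ⟨D * P * Dᴴ, ?_, ?_, ?_, ?_⟩
  · calc (D * P * Dᴴ) * (D * P * Dᴴ)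
        = D * (P * ((Dᴴ * D) * (P * Dᴴ))) := by simp only [Matrix.mul_assoc]
      _ = D * (P * (P * Dᴴ)) := by rw [hDHD, Matrix.one_mul]
      _ = D * P * Dᴴ := by rw [← Matrix.mul_assoc P P, hP2, Matrix.mul_assoc]
  · rw [Matrix.conjTranspose_mul, Matrix.conjTranspose_mul,
      Matrix.conjTranspose_conjTranspose, hPH, Matrix.mul_assoc]
  · have h1 : (D * P * Dᴴ).rank ≤ P.rank :=
      le_trans (Matrix.rank_mul_le_left _ _) (Matrix.rank_mul_le_right _ _)
    have hPfact : P = Dᴴ * (D * P * Dᴴ) * D := by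
      calc P = (Dᴴ * D) * P * (Dᴴ * D) := by rw [hDHD, Matrix.one_mul, Matrix.mul_one]
        _ = Dᴴ * (D * P * Dᴴ) * D := by simp only [Matrix.mul_assoc]
    have h2 : P.rank ≤ (D * P * Dᴴ).rank := by
      conv_lhs => rw [hPfact]
      exact le_trans (Matrix.rank_mul_le_left _ _) (Matrix.rank_mul_le_right _ _)
    omega
  · calc (D * P * Dᴴ) * shiftMatrix n * (D * P * Dᴴ)
        = D * (P * ((Dᴴ * shiftMatrix n * D) * (P * Dᴴ))) := by simp only [Matrix.mul_assoc]
      _ = D * (P * ((Complex.exp (θ * Complex.I) • shiftMatrix n) * (P * Dᴴ))) := by rw [hDSD]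
      _ = Complex.exp (θ * Complex.I) • (D * (P * (shiftMatrix n * (P * Dᴴ)))) := by
          rw [Matrix.smul_mul, Matrix.mul_smul, Matrix.mul_smul]
      _ = Complex.exp (θ * Complex.I) • (D * ((P * shiftMatrix n * P) * Dᴴ)) := by
          simp only [Matrix.mul_assoc]
      _ = (Complex.exp (θ * Complex.I) * z) • (D * P * Dᴴ) := by
          rw [hPS, Matrix.smul_mul, Matrix.mul_smul, smul_smul, Matrix.mul_assoc]

/-! ### Real sum machinery -/

def SB (n : ℕ) (f g : ℕ → ℝ) : ℝ := ∑ i ∈ Finset.range n, f i * g (i + 1)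

def IP (n : ℕ) (f g : ℕ → ℝ) : ℝ := ∑ i ∈ Finset.range n, f (i + 1) * g (i + 1)

lemma IP_comm (n : ℕ) (f g : ℕ → ℝ) : IP n f g = IP n g f :=
  Finset.sum_congr rfl fun i _ => mul_comm _ _

lemma keyA (n : ℕ) (f g : ℕ → ℝ) (r lam : ℝ) (hg0 : g 0 = 0) (hfN : f (n + 1) = 0)
    (hrec : ∀ i, (1 - lam) / 2 * f i - r * f (i + 1) + (1 + lam) / 2 * f (i + 2) = 0) :
    SB n f g - r * IP n f g = (1 + lam) / 2 * (SB n f g - SB n g f) := by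
  have hshift : ∑ i ∈ Finset.range n, f (i + 2) * g (i + 1) = SB n g f := by
    calc ∑ i ∈ Finset.range n, f (i + 2) * g (i + 1)
        = ∑ i ∈ Finset.range n, (fun j => g j * f (j + 1)) (i + 1) := by
          exact Finset.sum_congr rfl fun i _ => by simp [mul_comm]
      _ = (∑ i ∈ Finset.range (n + 1), g i * f (i + 1)) - g 0 * f 1 := by
          rw [Finset.sum_range_succ']; ring
      _ = ((∑ i ∈ Finset.range n, g i * f (i + 1)) + g n * f (n + 1)) - g 0 * f 1 := by
          rw [Finset.sum_range_succ]
      _ = SB n g f := by rw [hg0, hfN, SB]; ring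
  have hterm : ∀ i : ℕ, f i * g (i + 1) - r * (f (i + 1) * g (i + 1))
      = (1 + lam) / 2 * (f i * g (i + 1)) - (1 + lam) / 2 * (f (i + 2) * g (i + 1)) := by
    intro i
    linear_combination g (i + 1) * hrec i
  calc SB n f g - r * IP n f g
      = ∑ i ∈ Finset.range n, (f i * g (i + 1) - r * (f (i + 1) * g (i + 1))) := by
        rw [SB, IP, Finset.mul_sum, ← Finset.sum_sub_distrib]
    _ = ∑ i ∈ Finset.range n, ((1 + lam) / 2 * (f i * g (i + 1))
          - (1 + lam) / 2 * (f (i + 2) * g (i + 1))) :=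
        Finset.sum_congr rfl fun i _ => hterm i
    _ = (1 + lam) / 2 * ((∑ i ∈ Finset.range n, f i * g (i + 1))
          - ∑ i ∈ Finset.range n, f (i + 2) * g (i + 1)) := by
        rw [← Finset.sum_sub_distrib, Finset.mul_sum]
        exact Finset.sum_congr rfl fun i _ => by ring
    _ = (1 + lam) / 2 * (SB n f g - SB n g f) := by rw [hshift]; rfl

lemma keyPair (n : ℕ) (f g : ℕ → ℝ) (r lamf lamg : ℝ)
    (hf0 : f 0 = 0) (hg0 : g 0 = 0) (hfN : f (n + 1) = 0) (hgN : g (n + 1) = 0)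
    (hrecf : ∀ i, (1 - lamf) / 2 * f i - r * f (i + 1) + (1 + lamf) / 2 * f (i + 2) = 0)
    (hrecg : ∀ i, (1 - lamg) / 2 * g i - r * g (i + 1) + (1 + lamg) / 2 * g (i + 2) = 0)
    (hlam : lamf + lamg ≠ 0) :
    SB n f g = r * IP n f g ∧ SB n g f = r * IP n g f := by
  have ha := keyA n f g r lamf hg0 hfN hrecf
  have hb := keyA n g f r lamg hf0 hgN hrecg
  have hIP : IP n g f = IP n f g := IP_comm n g f
  have hW : (lamf + lamg) * (SB n f g - SB n g f) = 0 := by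
    linear_combination (-2 : ℝ) * ha + 2 * hb + 2 * r * hIP
  have hW0 : SB n f g - SB n g f = 0 := by
    rcases mul_eq_zero.mp hW with h | h
    · exact absurd h hlam
    · exact h
  constructor
  · linear_combination ha + (1 + lamf) / 2 * hW0
  · linear_combination hb - (1 + lamg) / 2 * hW0

lemma keySelf (n : ℕ) (f : ℕ → ℝ) (r lam : ℝ) (hf0 : f 0 = 0) (hfN : f (n + 1) = 0)
    (hrec : ∀ i, (1 - lam) / 2 * f i - r * f (i + 1) + (1 + lam) / 2 * f (i + 2) = 0) :
    SB n f f = r * IP n f f := by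
  have ha := keyA n f f r lam hf0 hfN hrec
  linear_combination ha

/-! ### Trig helpers -/

lemma trig2 (y b : ℝ) : Real.sin (y + b) + Real.sin (y - b) = 2 * Real.sin y * Real.cos b := by
  rw [Real.sin_add, Real.sin_sub]; ring

lemma sin_rec (β x : ℝ) :
    Real.sin (x + 2 * β) = 2 * Real.cos β * Real.sin (x + β) - Real.sin x := by
  have h := trig2 (x + β) β
  have h1 : x + β + β = x + 2 * β := by ring
  have h2 : x + β - β = x := by ring
  rw [h1, h2] at h; linarith

/-! ### Damped sine parameters -/

lemma damped_params {r c : ℝ} (hr : 0 < r) (hrc : r ≤ c) :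
    ∃ lam rho : ℝ, 0 ≤ lam ∧ 0 < rho ∧ (1 + lam) * rho ^ 2 = 1 - lam ∧
      r * rho = c * (1 - lam) ∧ (lam = 0 → r = c) := by
  have hc : 0 < c := lt_of_lt_of_le hr hrc
  set lam := Real.sqrt (1 - (r / c) ^ 2) with hlam
  have hdiv1 : r / c ≤ 1 := (div_le_one hc).mpr hrc
  have hdiv0 : 0 < r / c := div_pos hr hc
  have harg : 0 ≤ 1 - (r / c) ^ 2 := by nlinarith
  have hlsq : lam ^ 2 = 1 - (r / c) ^ 2 := Real.sq_sqrt harg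
  have hl0 : 0 ≤ lam := Real.sqrt_nonneg _
  have hr2 : r ^ 2 = c ^ 2 * (1 - lam ^ 2) := by
    rw [hlsq]; field_simp; ring
  have hl1 : 0 < 1 + lam := by linarith
  refine ⟨lam, r / (c * (1 + lam)), hl0, by positivity, ?_, ?_, ?_⟩
  · field_simp
    linear_combination hr2
  · field_simp
    linear_combination hr2
  · intro h0
    rw [h0] at hr2
    nlinarith

/-! ### Membership of 0 -/

theorem zero_mem {n k : ℕ} (hk1 : 1 ≤ k) (h2k : 2 * k ≤ n + 1) :
    (0 : ℂ) ∈ rankNumRange k (shiftMatrix n) := by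
  set X : Matrix (Fin n) (Fin k) ℂ :=
    Matrix.of (fun i m => if (i : ℕ) = 2 * (m : ℕ) then 1 else 0) with hX
  have hXa : ∀ (i : Fin n) (m : Fin k),
      X i m = if (i : ℕ) = 2 * (m : ℕ) then 1 else 0 := fun i m => rfl
  have hGone : Xᴴ * X = 1 := by
    ext a b
    rw [Matrix.mul_apply, Matrix.one_apply]
    by_cases hab : a = b
    · subst hab
      rw [if_pos rfl]
      have h2a : 2 * (a : ℕ) < n := by have := a.isLt; omega
      rw [Finset.sum_eq_single (⟨2 * (a : ℕ), h2a⟩ : Fin n)]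
      · rw [Matrix.conjTranspose_apply, hXa, if_pos (by simp)]; simp
      · intro i _ hi
        rw [Matrix.conjTranspose_apply, hXa, if_neg ?_]
        · simp
        · intro h; exact hi (Fin.ext (by simpa using h))
      · intro h; exact absurd (Finset.mem_univ _) h
    · rw [if_neg hab]
      apply Finset.sum_eq_zero
      intro i _
      rw [Matrix.conjTranspose_apply, hXa, hXa]
      by_cases h2 : (i : ℕ) = 2 * (b : ℕ)
      · rw [if_neg ?_]
        · simp
        · intro h1
          exact hab (Fin.ext (by omega))
      · rw [if_neg h2, mul_zero]
  have hSX : ∀ (i : Fin n) (b : Fin k),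
      (shiftMatrix n * X) i b = if (i : ℕ) = 2 * (b : ℕ) + 1 then 1 else 0 := by
    intro i b
    rw [Matrix.mul_apply]
    have hcongr : ∀ j : Fin n, shiftMatrix n i j * X j b
        = (if (i : ℕ) = (j : ℕ) + 1 then (1:ℂ) else 0) *
          (fun t => if t = 2 * (b : ℕ) + 1 then (1:ℂ) else 0) ((j : ℕ) + 1) := by
      intro j
      rw [shift_apply, hXa]
      congr 1
      exact if_congr (by omega) rfl rfl
    rw [Finset.sum_congr rfl fun j _ => hcongr j]
    exact sum_shift_row (fun t => if t = 2 * (b : ℕ) + 1 then (1:ℂ) else 0) (by norm_num) i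
  have hXSX : Xᴴ * shiftMatrix n * X = (0 : ℂ) • (Xᴴ * X) := by
    rw [zero_smul, Matrix.mul_assoc]
    ext a b
    rw [Matrix.mul_apply, Matrix.zero_apply]
    apply Finset.sum_eq_zero
    intro i _
    rw [Matrix.conjTranspose_apply, hXa, hSX]
    by_cases h2 : (i : ℕ) = 2 * (b : ℕ) + 1
    · rw [if_neg ?_]
      · simp
      · omega
    · rw [if_neg h2, mul_zero]
  have := mem_of_witness X (0 : ℂ) (by rw [hGone]; simp) hXSX
  exact this

/-! ### Membership of positive reals up to the radius -/

theorem pos_mem {n k : ℕ} (hk1 : 1 ≤ k) (h2k : 2 * k ≤ n + 1) (r : ℝ) (hr : 0 < r)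
    (hrk : r ≤ Real.cos ((k : ℝ) * Real.pi / ((n : ℝ) + 1))) :
    (r : ℂ) ∈ rankNumRange k (shiftMatrix n) := by
  have hπ := Real.pi_pos
  have hn1 : (0:ℝ) < (n:ℝ) + 1 := by positivity
  have hkang_le : (k : ℝ) * Real.pi / ((n:ℝ) + 1) ≤ Real.pi / 2 := by
    have h2 : (2 * k : ℝ) ≤ (n : ℝ) + 1 := by exact_mod_cast h2k
    rw [div_le_div_iff₀ hn1 (by norm_num : (0:ℝ) < 2)]
    nlinarith
  have hckpos : 0 < Real.cos ((k:ℝ) * Real.pi / ((n:ℝ) + 1)) := lt_of_lt_of_le hr hrk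
  have hkang_lt : (k:ℝ) * Real.pi / ((n:ℝ) + 1) < Real.pi / 2 := by
    rcases lt_or_eq_of_le hkang_le with h | h
    · exact h
    · exfalso; rw [h, Real.cos_pi_div_two] at hckpos; exact lt_irrefl 0 hckpos
  have h2k' : 2 * k ≤ n := by
    by_contra hcon
    have h1 : 2 * k = n + 1 := by omega
    have h2 : (2 * k : ℝ) = (n : ℝ) + 1 := by exact_mod_cast h1
    have heq : (k:ℝ) * Real.pi / ((n:ℝ) + 1) = Real.pi / 2 := by
      rw [div_eq_div_iff (ne_of_gt hn1) (by norm_num : (2:ℝ) ≠ 0)]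
      nlinarith
    linarith [hkang_lt, heq]
  set β : Fin k → ℝ := fun m => ((m : ℕ) + 1) * Real.pi / ((n : ℝ) + 1) with hβ
  have hβpos : ∀ m, 0 < β m := by
    intro m; rw [hβ]; positivity
  have hβle : ∀ m, β m ≤ (k:ℝ) * Real.pi / ((n:ℝ) + 1) := by
    intro m
    have hm1 : ((m : ℕ) + 1 : ℝ) ≤ (k : ℝ) := by
      have := m.isLt; exact_mod_cast this
    have h2 : ((m : ℕ) + 1 : ℝ) * Real.pi ≤ (k : ℝ) * Real.pi := by nlinarith
    show ((m : ℕ) + 1 : ℝ) * Real.pi / ((n:ℝ) + 1) ≤ (k : ℝ) * Real.pi / ((n:ℝ) + 1)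
    gcongr
  have hβlt : ∀ m, β m < Real.pi / 2 := fun m => lt_of_le_of_lt (hβle m) hkang_lt
  have hβinj : ∀ a b : Fin k, β a = β b → a = b := by
    intro a b h
    have hne : Real.pi / ((n:ℝ) + 1) ≠ 0 := by positivity
    have h1 : (((a:ℕ):ℝ) + 1) * (Real.pi / ((n:ℝ) + 1))
        = (((b:ℕ):ℝ) + 1) * (Real.pi / ((n:ℝ) + 1)) := by
      rw [hβ] at h
      simpa only [mul_div_assoc] using h
    have h2 := mul_right_cancel₀ hne h1
    have h3 : (a : ℕ) + 1 = (b : ℕ) + 1 := by exact_mod_cast h2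
    exact Fin.ext (by omega)
  set c : Fin k → ℝ := fun m => Real.cos (β m) with hc
  have hrc : ∀ m, r ≤ c m := by
    intro m
    refine le_trans hrk ?_
    exact Real.cos_le_cos_of_nonneg_of_le_pi (le_of_lt (hβpos m)) (by linarith) (hβle m)
  have hcpos : ∀ m, 0 < c m := fun m => lt_of_lt_of_le hr (hrc m)
  choose lam rho hlam0 hrho hE1 hE2 hlz using fun m => damped_params hr (hrc m)
  set f : Fin k → ℕ → ℝ := fun m i => rho m ^ i * Real.sin ((i : ℝ) * β m) with hf
  have hf0 : ∀ m, f m 0 = 0 := by intro m; simp [hf]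
  have hfN : ∀ m, f m (n + 1) = 0 := by
    intro m
    have harg : ((n + 1 : ℕ) : ℝ) * β m = ((m : ℕ) + 1 : ℕ) * Real.pi := by
      rw [hβ]; push_cast; field_simp
    rw [hf]
    simp only
    rw [harg, Real.sin_nat_mul_pi, mul_zero]
  have hrec : ∀ m i, (1 - lam m) / 2 * f m i - r * f m (i + 1)
      + (1 + lam m) / 2 * f m (i + 2) = 0 := by
    intro m i
    have hs : Real.sin (((i:ℝ) + 2) * β m)
        = 2 * c m * Real.sin (((i:ℝ) + 1) * β m) - Real.sin ((i:ℝ) * β m) := by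
      have h := sin_rec (β m) ((i:ℝ) * β m)
      rw [show (i:ℝ) * β m + 2 * β m = ((i:ℝ) + 2) * β m by ring,
          show (i:ℝ) * β m + β m = ((i:ℝ) + 1) * β m by ring] at h
      exact h
    rw [hf]
    simp only
    push_cast
    rw [hs]
    linear_combination (rho m ^ i * (c m * Real.sin (((i:ℝ) + 1) * β m)
      - Real.sin ((i:ℝ) * β m) / 2)) * hE1 m
      + (-(rho m ^ i * Real.sin (((i:ℝ) + 1) * β m))) * hE2 m
  set X : Matrix (Fin n) (Fin k) ℂ :=
    Matrix.of (fun i m => ((f m ((i : ℕ) + 1) : ℝ) : ℂ)) with hX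
  have hXa : ∀ (i : Fin n) (m : Fin k), X i m = ((f m ((i : ℕ) + 1) : ℝ) : ℂ) :=
    fun i m => rfl
  have hSX : ∀ (i : Fin n) (b : Fin k),
      (shiftMatrix n * X) i b = ((f b (i : ℕ) : ℝ) : ℂ) := by
    intro i b
    rw [Matrix.mul_apply]
    have hcongr : ∀ j : Fin n, shiftMatrix n i j * X j b
        = (if (i : ℕ) = (j : ℕ) + 1 then (1:ℂ) else 0) *
          (fun t => ((f b t : ℝ) : ℂ)) ((j : ℕ) + 1) := by
      intro j; rw [shift_apply, hXa]
    rw [Finset.sum_congr rfl fun j _ => hcongr j]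
    exact sum_shift_row (fun t => ((f b t : ℝ) : ℂ)) (by simp [hf0 b]) i
  have hmain : ∀ a b : Fin k, SB n (f b) (f a) = r * IP n (f b) (f a) := by
    intro a b
    by_cases hab : a = b
    · subst hab; exact keySelf n (f a) r (lam a) (hf0 a) (hfN a) (hrec a)
    · have hll : lam b + lam a ≠ 0 := by
        intro h0
        have hla : lam a = 0 := by linarith [hlam0 a, hlam0 b]
        have hlb : lam b = 0 := by linarith [hlam0 a, hlam0 b]
        apply hab
        apply hβinj
        apply Real.injOn_cos ⟨le_of_lt (hβpos a), by linarith [hβlt a]⟩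
          ⟨le_of_lt (hβpos b), by linarith [hβlt b]⟩
        calc Real.cos (β a) = c a := rfl
          _ = r := (hlz a hla).symm
          _ = c b := hlz b hlb
          _ = Real.cos (β b) := rfl
      exact (keyPair n (f b) (f a) r (lam b) (lam a) (hf0 b) (hf0 a) (hfN b) (hfN a)
        (hrec b) (hrec a) hll).1
  have hXSX : Xᴴ * shiftMatrix n * X = (r : ℂ) • (Xᴴ * X) := by
    rw [Matrix.mul_assoc]
    ext a b
    rw [Matrix.mul_apply, Matrix.smul_apply, Matrix.mul_apply, Finset.smul_sum]
    have hL : ∀ i : Fin n, Xᴴ a i * (shiftMatrix n * X) i b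
        = (((f b (i:ℕ) * f a ((i:ℕ) + 1) : ℝ)) : ℂ) := by
      intro i
      rw [Matrix.conjTranspose_apply, hSX, hXa, ← starRingEnd_apply, Complex.conj_ofReal]
      push_cast; ring
    have hR : ∀ i : Fin n, (r : ℂ) • (Xᴴ a i * X i b)
        = (((r * (f b ((i:ℕ) + 1) * f a ((i:ℕ) + 1)) : ℝ)) : ℂ) := by
      intro i
      rw [Matrix.conjTranspose_apply, hXa, hXa, ← starRingEnd_apply, Complex.conj_ofReal,
        smul_eq_mul]
      push_cast; ring
    rw [Finset.sum_congr rfl fun i _ => hL i, Finset.sum_congr rfl fun i _ => hR i]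
    rw [← Complex.ofReal_sum, ← Complex.ofReal_sum, Complex.ofReal_inj]
    rw [Fin.sum_univ_eq_sum_range (fun i => f b i * f a (i + 1)) n,
        Fin.sum_univ_eq_sum_range (fun i => r * (f b (i + 1) * f a (i + 1))) n]
    have := hmain a b
    rw [SB, IP] at this
    rw [this, Finset.mul_sum]
  -- independence
  have hindep : ∀ av : Fin k → ℂ, X.mulVec av = 0 → av = 0 := by
    intro av hXav
    set zf : Fin k → ℂ := fun m => ((rho m : ℝ) : ℂ) * Complex.exp ((β m : ℝ) * Complex.I)
      with hzf
    have hzarg : ∀ m, (zf m).arg = β m := by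
      intro m
      rw [hzf]
      simp only
      rw [Complex.exp_mul_I]
      exact Complex.arg_mul_cos_add_sin_mul_I (hrho m)
        ⟨by linarith [hβpos m], by linarith [hβlt m]⟩
    have hzne0 : ∀ m, zf m ≠ 0 := by
      intro m
      rw [hzf]
      simp only
      exact mul_ne_zero (by exact_mod_cast ne_of_gt (hrho m)) (Complex.exp_ne_zero _)
    have hfz : ∀ (m : Fin k) (i : ℕ), ((f m i : ℝ) : ℂ)
        = (zf m ^ i - (starRingEnd ℂ) (zf m) ^ i) / (2 * Complex.I) := by
      intro m i
      have hzp : zf m ^ i = ((rho m ^ i : ℝ) : ℂ)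
          * (((Real.cos ((i:ℝ) * β m) : ℝ) : ℂ)
            + ((Real.sin ((i:ℝ) * β m) : ℝ) : ℂ) * Complex.I) := by
        rw [hzf]
        simp only
        rw [mul_pow, ← Complex.exp_nat_mul]
        have harg : (i : ℂ) * (((β m : ℝ) : ℂ) * Complex.I)
            = (((i:ℝ) * β m : ℝ) : ℂ) * Complex.I := by push_cast; ring
        rw [harg, Complex.exp_mul_I, Complex.ofReal_cos, Complex.ofReal_sin]
        push_cast; ring
      have hzcp : (starRingEnd ℂ) (zf m) ^ i = ((rho m ^ i : ℝ) : ℂ)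
          * (((Real.cos ((i:ℝ) * β m) : ℝ) : ℂ)
            - ((Real.sin ((i:ℝ) * β m) : ℝ) : ℂ) * Complex.I) := by
        rw [← map_pow, hzp]
        simp only [_root_.map_mul, map_add, Complex.conj_ofReal, Complex.conj_I]
        ring
      rw [hzp, hzcp, hf]
      simp only
      have hI : (2 : ℂ) * Complex.I ≠ 0 := by simp [Complex.I_ne_zero]
      field_simp
      push_cast
      ring
    have hkk : k + k ≤ n := by omega
    set u : Fin (k + k) → ℂ := Fin.addCases zf (fun m => (starRingEnd ℂ) (zf m)) with hu
    set bv : Fin (k + k) → ℂ := Fin.addCases (fun m => av m * zf m / (2 * Complex.I))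
      (fun m => -(av m * (starRingEnd ℂ) (zf m)) / (2 * Complex.I)) with hbv
    have hrel : ∀ i : Fin (k + k), ∑ j, u j ^ (i : ℕ) * bv j = 0 := by
      intro i
      have hii : (i : ℕ) < n := lt_of_lt_of_le i.isLt hkk
      have h0 := congrFun hXav ⟨(i : ℕ), hii⟩
      simp only [Matrix.mulVec, dotProduct, Pi.zero_apply] at h0
      rw [Fin.sum_univ_add]
      simp only [hu, hbv, Fin.addCases_left, Fin.addCases_right]
      rw [← Finset.sum_add_distrib]
      have hterm : ∀ m : Fin k, zf m ^ (i:ℕ) * (av m * zf m / (2*Complex.I))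
          + (starRingEnd ℂ) (zf m) ^ (i:ℕ)
            * (-(av m * (starRingEnd ℂ) (zf m)) / (2*Complex.I))
          = X ⟨(i:ℕ), hii⟩ m * av m := by
        intro m
        rw [hXa, hfz m ((i:ℕ)+1)]
        have hI : (2 : ℂ) * Complex.I ≠ 0 := by simp [Complex.I_ne_zero]
        field_simp
        ring
      rw [Finset.sum_congr rfl fun m _ => hterm m, h0]
    have hzinj : ∀ a b : Fin k, zf a = zf b → a = b := by
      intro a b h
      apply hβinj
      rw [← hzarg a, ← hzarg b, h]
    have hzcne : ∀ a b : Fin k, zf a ≠ (starRingEnd ℂ) (zf b) := by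
      intro a b h
      have h1 := congrArg Complex.arg h
      rw [hzarg, Complex.arg_conj, if_neg] at h1
      · rw [hzarg] at h1; linarith [hβpos a, hβpos b]
      · rw [hzarg]; intro hcon; linarith [hβlt b]
    have huinj : Function.Injective u := by
      have key : ∀ j1 j2 : Fin (k + k), u j1 = u j2 → j1 = j2 := by
        intro j1 j2
        refine Fin.addCases (motive := fun t => u t = u j2 → t = j2) ?_ ?_ j1
        · intro a
          refine Fin.addCases
            (motive := fun t => u (Fin.castAdd k a) = u t → Fin.castAdd k a = t) ?_ ?_ j2
          · intro b h
            simp only [hu, Fin.addCases_left] at h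
            rw [hzinj a b h]
          · intro b h
            simp only [hu, Fin.addCases_left, Fin.addCases_right] at h
            exact absurd h (hzcne a b)
        · intro a
          refine Fin.addCases
            (motive := fun t => u (Fin.natAdd k a) = u t → Fin.natAdd k a = t) ?_ ?_ j2
          · intro b h
            simp only [hu, Fin.addCases_left, Fin.addCases_right] at h
            exact absurd h.symm (hzcne b a)
          · intro b h
            simp only [hu, Fin.addCases_right] at h
            have h2 : zf a = zf b := by
              have h3 := congrArg (starRingEnd ℂ) h
              simpa using h3
            rw [hzinj a b h2]
      exact fun {j1 j2} h => key j1 j2 h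
    have hdetV : ((Matrix.vandermonde u)ᵀ).det ≠ 0 := by
      rw [Matrix.det_transpose, Matrix.det_vandermonde]
      rw [Finset.prod_ne_zero_iff]
      intro i _
      rw [Finset.prod_ne_zero_iff]
      intro j hj
      have hij : i < j := Finset.mem_Ioi.mp hj
      exact sub_ne_zero.mpr (fun h => hij.ne' (huinj h))
    have hMv : (Matrix.vandermonde u)ᵀ.mulVec bv = 0 := by
      funext i
      simp only [Matrix.mulVec, dotProduct, Matrix.transpose_apply,
        Matrix.vandermonde_apply, Pi.zero_apply]
      exact hrel i
    have hbv0 : bv = 0 := by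
      have hU : IsUnit ((Matrix.vandermonde u)ᵀ).det := isUnit_iff_ne_zero.mpr hdetV
      calc bv = (1 : Matrix (Fin (k+k)) (Fin (k+k)) ℂ).mulVec bv := (Matrix.one_mulVec bv).symm
        _ = (((Matrix.vandermonde u)ᵀ)⁻¹ * (Matrix.vandermonde u)ᵀ).mulVec bv := by
            rw [Matrix.nonsing_inv_mul _ hU]
        _ = (((Matrix.vandermonde u)ᵀ)⁻¹).mulVec (((Matrix.vandermonde u)ᵀ).mulVec bv) := by
            rw [Matrix.mulVec_mulVec]
        _ = 0 := by rw [hMv, Matrix.mulVec_zero]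
    funext m
    have h1 := congrFun hbv0 (Fin.castAdd k m)
    simp only [hbv, Fin.addCases_left, Pi.zero_apply] at h1
    have hI : (2 : ℂ) * Complex.I ≠ 0 := by simp [Complex.I_ne_zero]
    rw [div_eq_zero_iff] at h1
    rw [Pi.zero_apply]
    rcases h1 with h1 | h1
    · rcases mul_eq_zero.mp h1 with h2 | h2
      · exact h2
      · exact absurd h2 (hzne0 m)
    · exact absurd h1 hI
  have hdet : IsUnit (Xᴴ * X).det := by
    rw [isUnit_iff_ne_zero]
    intro hdet0
    obtain ⟨v, hv0, hGv⟩ := Matrix.exists_mulVec_eq_zero_iff.mpr hdet0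
    have hXv : X.mulVec v = 0 := by
      have hq : star v ⬝ᵥ (Xᴴ * X).mulVec v = 0 := by rw [hGv, dotProduct_zero]
      rw [← Matrix.mulVec_mulVec, Matrix.dotProduct_mulVec, ← Matrix.star_mulVec] at hq
      set w := X.mulVec v with hw
      have hcast : star w ⬝ᵥ w = ((∑ i, Complex.normSq (w i) : ℝ) : ℂ) := by
        rw [dotProduct]
        push_cast
        apply Finset.sum_congr rfl
        intro i _
        rw [Pi.star_apply, ← starRingEnd_apply, mul_comm, Complex.mul_conj]
      rw [hcast, Complex.ofReal_eq_zero] at hq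
      have hterm := (Finset.sum_eq_zero_iff_of_nonneg
        (fun i _ => Complex.normSq_nonneg (w i))).mp hq
      funext i
      exact Complex.normSq_eq_zero.mp (hterm i (Finset.mem_univ i))
    exact hv0 (hindep v hXv)
  exact mem_of_witness X (r : ℂ) hdet hXSX

/-! ### The sine eigenbasis of S + Sᴴ -/

lemma trig3 (a b : ℝ) : Real.sin (a + b) - Real.sin (a - b) = 2 * Real.cos a * Real.sin b := by
  rw [Real.sin_add, Real.sin_sub]; ring

def gv (n : ℕ) (m : Fin n) (j : ℕ) : ℝ :=
  Real.sqrt (2 / ((n : ℝ) + 1)) *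
    Real.sin ((j : ℝ) * (((m : ℕ) + 1) * Real.pi / ((n : ℝ) + 1)))

def cval (n : ℕ) (m : Fin n) : ℝ := Real.cos (((m : ℕ) + 1) * Real.pi / ((n : ℝ) + 1))

def Vmat (n : ℕ) : Matrix (Fin n) (Fin n) ℂ :=
  Matrix.of fun i m => ((gv n m ((i : ℕ) + 1) : ℝ) : ℂ)

lemma Vmat_apply (n : ℕ) (i m : Fin n) :
    Vmat n i m = ((gv n m ((i : ℕ) + 1) : ℝ) : ℂ) := rfl

lemma gv0 (n : ℕ) (m : Fin n) : gv n m 0 = 0 := by simp [gv]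

lemma gvN (n : ℕ) (m : Fin n) : gv n m (n + 1) = 0 := by
  have hn1 : ((n : ℝ) + 1) ≠ 0 := by positivity
  rw [gv]
  have harg : ((n + 1 : ℕ) : ℝ) * (((m : ℕ) + 1) * Real.pi / ((n : ℝ) + 1))
      = ((m : ℕ) + 1 : ℕ) * Real.pi := by push_cast; field_simp
  rw [harg, Real.sin_nat_mul_pi, mul_zero]

lemma gv_rec (n : ℕ) (m : Fin n) (j : ℕ) :
    gv n m j + gv n m (j + 2) = 2 * cval n m * gv n m (j + 1) := by
  set b := ((m : ℕ) + 1) * Real.pi / ((n : ℝ) + 1) with hb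
  have h := trig2 (((j : ℝ) + 1) * b) b
  rw [show ((j:ℝ) + 1) * b + b = ((j:ℝ) + 2) * b by ring,
      show ((j:ℝ) + 1) * b - b = (j:ℝ) * b by ring] at h
  rw [gv, gv, gv, cval]
  push_cast
  rw [← hb]
  linear_combination Real.sqrt (2 / ((n:ℝ) + 1)) * h

lemma SV_apply (n : ℕ) (i m : Fin n) :
    (shiftMatrix n * Vmat n) i m = ((gv n m (i : ℕ) : ℝ) : ℂ) := by
  rw [Matrix.mul_apply]
  have hcongr : ∀ j : Fin n, shiftMatrix n i j * Vmat n j m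
      = (if (i : ℕ) = (j : ℕ) + 1 then (1:ℂ) else 0) *
        (fun t => ((gv n m t : ℝ) : ℂ)) ((j : ℕ) + 1) := by
    intro j; rw [shift_apply, Vmat_apply]
  rw [Finset.sum_congr rfl fun j _ => hcongr j]
  exact sum_shift_row (fun t => ((gv n m t : ℝ) : ℂ)) (by simp [gv0]) i

lemma STV_apply (n : ℕ) (i m : Fin n) :
    ((shiftMatrix n)ᴴ * Vmat n) i m = ((gv n m ((i : ℕ) + 2) : ℝ) : ℂ) := by
  rw [Matrix.mul_apply]
  have hcongr : ∀ j : Fin n, (shiftMatrix n)ᴴ i j * Vmat n j m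
      = (if (j : ℕ) = (i : ℕ) + 1 then (1:ℂ) else 0) *
        (fun t => ((gv n m t : ℝ) : ℂ)) ((j : ℕ) + 1) := by
    intro j; rw [shiftT_apply, Vmat_apply]
  rw [Finset.sum_congr rfl fun j _ => hcongr j]
  exact sum_shiftT_row (fun t => ((gv n m t : ℝ) : ℂ)) (by simp [gvN]) i

lemma eig_eq (n : ℕ) :
    (shiftMatrix n + (shiftMatrix n)ᴴ) * Vmat n
      = Vmat n * Matrix.diagonal (fun m => ((2 * cval n m : ℝ) : ℂ)) := by
  ext i m
  rw [Matrix.add_mul, Matrix.add_apply, SV_apply, STV_apply, Matrix.mul_diagonal, Vmat_apply]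
  rw [← Complex.ofReal_add, ← Complex.ofReal_mul, Complex.ofReal_inj]
  rw [gv_rec n m (i : ℕ)]
  ring

lemma cval_inj (n : ℕ) {a b : Fin n} (h : cval n a = cval n b) : a = b := by
  have hπ := Real.pi_pos
  have hn1 : (0:ℝ) < (n:ℝ) + 1 := by positivity
  have hang : ∀ m : Fin n, 0 < (((m : ℕ) + 1) * Real.pi / ((n : ℝ) + 1))
      ∧ (((m : ℕ) + 1) * Real.pi / ((n : ℝ) + 1)) < Real.pi := by
    intro m
    constructor
    · positivity
    · rw [div_lt_iff₀ hn1]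
      have : ((m : ℕ) + 1 : ℝ) ≤ (n : ℝ) := by exact_mod_cast m.isLt
      nlinarith
  have h2 : (((a : ℕ) + 1 : ℝ)) * Real.pi / ((n : ℝ) + 1)
      = (((b : ℕ) + 1 : ℝ)) * Real.pi / ((n : ℝ) + 1) := by
    apply Real.injOn_cos ⟨le_of_lt (hang a).1, le_of_lt (hang a).2⟩
      ⟨le_of_lt (hang b).1, le_of_lt (hang b).2⟩
    exact h
  have hne : Real.pi / ((n:ℝ) + 1) ≠ 0 := by positivity
  have h3 : (((a:ℕ):ℝ) + 1) * (Real.pi / ((n:ℝ) + 1))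
      = (((b:ℕ):ℝ) + 1) * (Real.pi / ((n:ℝ) + 1)) := by
    simpa only [mul_div_assoc] using h2
  have h4 := mul_right_cancel₀ hne h3
  have h5 : (a : ℕ) + 1 = (b : ℕ) + 1 := by exact_mod_cast h4
  exact Fin.ext (by omega)

lemma cos_sum (n μ : ℕ) (hμ1 : 1 ≤ μ) (hμn : μ ≤ n) :
    ∑ i ∈ Finset.range n, Real.cos ((((i:ℝ)) + 1) * (2 * ((μ:ℝ) * Real.pi / ((n:ℝ) + 1))))
      = -1 := by
  have hπ := Real.pi_pos
  have hn1 : (0:ℝ) < (n:ℝ) + 1 := by positivity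
  set ψ := 2 * ((μ:ℝ) * Real.pi / ((n:ℝ) + 1)) with hψ
  have hs2 : ψ / 2 = (μ:ℝ) * Real.pi / ((n:ℝ) + 1) := by rw [hψ]; ring
  have hspos : 0 < Real.sin (ψ / 2) := by
    rw [hs2]
    apply Real.sin_pos_of_pos_of_lt_pi
    · positivity
    · rw [div_lt_iff₀ hn1]
      have : (μ : ℝ) ≤ (n : ℝ) := by exact_mod_cast hμn
      nlinarith
  have hsplit : ∀ i : ℕ, 2 * Real.sin (ψ / 2) * Real.cos (((i:ℝ) + 1) * ψ)
      = (fun t : ℕ => Real.sin ((t:ℝ) * ψ + ψ / 2)) (i + 1)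
        - (fun t : ℕ => Real.sin ((t:ℝ) * ψ + ψ / 2)) i := by
    intro i
    simp only
    have h := trig3 (((i:ℝ) + 1) * ψ) (ψ / 2)
    rw [show ((i:ℝ) + 1) * ψ - ψ/2 = (i:ℝ) * ψ + ψ/2 by ring] at h
    push_cast
    linarith [h]
  have hsum : ∑ i ∈ Finset.range n, (2 * Real.sin (ψ / 2) * Real.cos (((i:ℝ) + 1) * ψ))
      = Real.sin ((n:ℝ) * ψ + ψ / 2) - Real.sin (ψ / 2) := by
    rw [Finset.sum_congr rfl fun i _ => hsplit i,
      Finset.sum_range_sub (fun t : ℕ => Real.sin ((t:ℝ) * ψ + ψ / 2))]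
    norm_num
  have hend : Real.sin ((n:ℝ) * ψ + ψ / 2) = - Real.sin (ψ / 2) := by
    have harg : (n:ℝ) * ψ + ψ / 2 = ((2 * μ : ℕ) : ℝ) * Real.pi - (μ:ℝ) * Real.pi / ((n:ℝ) + 1) := by
      rw [hψ]; push_cast; field_simp; ring
    rw [harg, Real.sin_sub, Real.sin_nat_mul_pi, hs2]
    have hcos : Real.cos (((2 * μ : ℕ) : ℝ) * Real.pi) = 1 := by
      push_cast
      rw [show (2 * (μ:ℝ)) * Real.pi = (μ:ℝ) * (2 * Real.pi) by ring]
      exact Real.cos_nat_mul_two_pi μ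
    rw [hcos]
    ring
  have hfinal : 2 * Real.sin (ψ / 2) *
      (∑ i ∈ Finset.range n, Real.cos (((i:ℝ) + 1) * ψ)) = 2 * Real.sin (ψ / 2) * (-1) := by
    rw [Finset.mul_sum] at *
    rw [hsum, hend]; ring
  have h2s : 2 * Real.sin (ψ / 2) ≠ 0 := by positivity
  exact mul_left_cancel₀ h2s hfinal

lemma Vmat_unitary (n : ℕ) : (Vmat n)ᴴ * Vmat n = 1 := by
  have hπ := Real.pi_pos
  have hn1 : (0:ℝ) < (n:ℝ) + 1 := by positivity
  set G := (Vmat n)ᴴ * Vmat n with hG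
  set Dg := Matrix.diagonal (fun m : Fin n => ((2 * cval n m : ℝ) : ℂ)) with hDg
  have hGH : Gᴴ = G := by
    rw [hG, Matrix.conjTranspose_mul, Matrix.conjTranspose_conjTranspose]
  have hDgH : Dgᴴ = Dg := by
    have hfun : (star fun m : Fin n => ((2 * cval n m : ℝ) : ℂ))
        = fun m : Fin n => ((2 * cval n m : ℝ) : ℂ) := by
      funext j
      rw [Pi.star_apply, ← starRingEnd_apply, Complex.conj_ofReal]
    rw [hDg, Matrix.diagonal_conjTranspose, hfun]
  have hSH : (shiftMatrix n + (shiftMatrix n)ᴴ)ᴴ = shiftMatrix n + (shiftMatrix n)ᴴ := by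
    rw [Matrix.conjTranspose_add, Matrix.conjTranspose_conjTranspose, add_comm]
  have hM : (Vmat n)ᴴ * ((shiftMatrix n + (shiftMatrix n)ᴴ) * Vmat n) = G * Dg := by
    rw [eig_eq, hG, Matrix.mul_assoc]
  have hMH : (G * Dg)ᴴ = G * Dg := by
    rw [← hM, Matrix.conjTranspose_mul, Matrix.conjTranspose_mul, hSH,
      Matrix.conjTranspose_conjTranspose, Matrix.mul_assoc]
  have hcomm : Dg * G = G * Dg := by
    calc Dg * G = Dgᴴ * Gᴴ := by rw [hDgH, hGH]
      _ = (G * Dg)ᴴ := (Matrix.conjTranspose_mul G Dg).symm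
      _ = G * Dg := hMH
  ext a b
  by_cases hab : a = b
  · subst hab
    rw [Matrix.one_apply_eq, hG, Matrix.mul_apply]
    have hterm : ∀ i : Fin n, (Vmat n)ᴴ a i * Vmat n i a
        = ((gv n a ((i:ℕ) + 1) ^ 2 : ℝ) : ℂ) := by
      intro i
      rw [Matrix.conjTranspose_apply, Vmat_apply, ← starRingEnd_apply, Complex.conj_ofReal]
      push_cast; ring
    rw [Finset.sum_congr rfl fun i _ => hterm i, ← Complex.ofReal_sum]
    rw [show (1 : ℂ) = ((1 : ℝ) : ℂ) by norm_num, Complex.ofReal_inj]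
    rw [Fin.sum_univ_eq_sum_range (fun i => gv n a (i + 1) ^ 2) n]
    set μ : ℕ := (a : ℕ) + 1 with hμ
    set ψ : ℝ := 2 * ((μ:ℝ) * Real.pi / ((n:ℝ) + 1)) with hψ
    have hsq : ∀ i : ℕ, gv n a (i + 1) ^ 2
        = 2 / ((n:ℝ) + 1) * ((1 - Real.cos (((i:ℝ) + 1) * ψ)) / 2) := by
      intro i
      rw [gv, mul_pow, Real.sq_sqrt (by positivity : (0:ℝ) ≤ 2 / ((n:ℝ) + 1)), Real.sin_sq_eq_half_sub]
      have harg : 2 * (((i + 1 : ℕ) : ℝ) * (((a:ℕ) + 1) * Real.pi / ((n : ℝ) + 1)))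
          = ((i:ℝ) + 1) * ψ := by
        rw [hψ, hμ]; push_cast; ring
      rw [harg]
      ring
    rw [Finset.sum_congr rfl fun i _ => hsq i, ← Finset.mul_sum]
    have hc := cos_sum n μ (by omega) (by have := a.isLt; omega)
    rw [← hψ] at hc
    have hsum2 : ∑ i ∈ Finset.range n, (1 - Real.cos (((i:ℝ) + 1) * ψ)) / 2
        = ((n:ℝ) + 1) / 2 := by
      rw [← Finset.sum_div, Finset.sum_sub_distrib, Finset.sum_const, Finset.card_range, hc]
      simp
    rw [hsum2]
    field_simp
  · rw [Matrix.one_apply_ne hab]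
    have hentry := congrFun (congrFun hcomm a) b
    rw [Matrix.diagonal_mul, Matrix.mul_diagonal] at hentry
    have hd : ((2 * cval n a : ℝ) : ℂ) ≠ ((2 * cval n b : ℝ) : ℂ) := by
      rw [Ne, Complex.ofReal_inj]
      intro h
      exact hab (cval_inj n (by linarith))
    by_contra hG0
    apply hd
    have : (((2 * cval n a : ℝ) : ℂ) - ((2 * cval n b : ℝ) : ℂ)) * G a b = 0 := by
      rw [sub_mul, hentry]; ring
    rcases mul_eq_zero.mp this with h | h
    · exact sub_eq_zero.mp h
    · exact absurd h hG0

/-! ### Upper bound -/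

lemma star_dot_conjT {n : ℕ} (A : Matrix (Fin n) (Fin n) ℂ) (v : Fin n → ℂ) :
    star v ⬝ᵥ (Aᴴ.mulVec v) = star (star v ⬝ᵥ (A.mulVec v)) := by
  rw [Matrix.star_dotProduct, Matrix.star_mulVec, Matrix.conjTranspose_conjTranspose,
    ← Matrix.dotProduct_mulVec]

set_option maxHeartbeats 1000000 in
theorem re_le_of_mem {n k : ℕ} (hk1 : 1 ≤ k) (h2k : 2 * k ≤ n + 1) {z : ℂ}
    (hz : z ∈ rankNumRange k (shiftMatrix n)) :
    z.re ≤ Real.cos ((k : ℝ) * Real.pi / ((n : ℝ) + 1)) := by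
  have hπ := Real.pi_pos
  have hn1 : (0:ℝ) < (n:ℝ) + 1 := by positivity
  obtain ⟨P, hP2, hPH, hPr, hPS⟩ := hz
  have hkn : k - 1 ≤ n := by omega
  set M : Matrix (Fin (k - 1)) (Fin n) ℂ :=
    Matrix.of (fun j i => (Vmat n)ᴴ (Fin.castLE hkn j) i) with hM
  set VS := LinearMap.range (Matrix.mulVecLin P) with hVS
  have hfr : Module.finrank ℂ VS = k := hPr
  set L : VS →ₗ[ℂ] (Fin (k - 1) → ℂ) := (Matrix.mulVecLin M).comp VS.subtype with hL
  have hker : LinearMap.ker L ≠ ⊥ := by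
    intro hkerbot
    have hinj : Function.Injective L := LinearMap.ker_eq_bot.mp hkerbot
    have hle := LinearMap.finrank_le_finrank_of_injective hinj
    rw [hfr, Module.finrank_pi, Fintype.card_fin] at hle
    omega
  obtain ⟨x', hx'mem, hx'ne⟩ := (Submodule.ne_bot_iff _).mp hker
  set x : Fin n → ℂ := (x' : Fin n → ℂ) with hx
  have hxne : x ≠ 0 := fun h => hx'ne (Subtype.ext h)
  have hxP : P.mulVec x = x := by
    obtain ⟨u, hu⟩ := LinearMap.mem_range.mp x'.2
    rw [Matrix.mulVecLin_apply] at hu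
    rw [hx, ← hu, Matrix.mulVec_mulVec, hP2]
  have hxM : M.mulVec x = 0 := by
    have h := hx'mem
    rw [LinearMap.mem_ker, hL, LinearMap.comp_apply] at h
    simpa using h
  set y := (Vmat n)ᴴ.mulVec x with hy
  have hy0 : ∀ m : Fin n, (m : ℕ) < k - 1 → y m = 0 := by
    intro m hm
    have h := congrFun hxM ⟨(m : ℕ), by omega⟩
    have hcast : Fin.castLE hkn ⟨(m : ℕ), hm⟩ = m := Fin.ext rfl
    simp only [Matrix.mulVec, dotProduct, hM, Matrix.of_apply, Pi.zero_apply] at h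
    rw [hcast] at h
    rw [hy]
    simpa [Matrix.mulVec, dotProduct] using h
  -- dot product identities
  have hdot1 : star x ⬝ᵥ (shiftMatrix n).mulVec x = z * (star x ⬝ᵥ x) := by
    calc star x ⬝ᵥ (shiftMatrix n).mulVec x
        = star (P.mulVec x) ⬝ᵥ ((shiftMatrix n).mulVec (P.mulVec x)) := by rw [hxP]
      _ = (star x ᵥ* Pᴴ) ⬝ᵥ ((shiftMatrix n).mulVec (P.mulVec x)) := by
          rw [Matrix.star_mulVec]
      _ = star x ⬝ᵥ (Pᴴ.mulVec ((shiftMatrix n).mulVec (P.mulVec x))) :=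
          (Matrix.dotProduct_mulVec _ _ _).symm
      _ = star x ⬝ᵥ ((Pᴴ * shiftMatrix n * P).mulVec x) := by
          rw [Matrix.mulVec_mulVec, Matrix.mulVec_mulVec]
      _ = star x ⬝ᵥ ((P * shiftMatrix n * P).mulVec x) := by rw [hPH]
      
      _ = star x ⬝ᵥ ((z • P).mulVec x) := by rw [hPS]
      _ = z * (star x ⬝ᵥ x) := by
          rw [Matrix.smul_mulVec, dotProduct_smul, hxP, smul_eq_mul]
  have hdot2 : star x ⬝ᵥ ((shiftMatrix n)ᴴ.mulVec x) = star (z * (star x ⬝ᵥ x)) := by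
    rw [star_dot_conjT, hdot1]
  have hVVH : Vmat n * (Vmat n)ᴴ = 1 := mul_eq_one_comm.mp (Vmat_unitary n)
  set Dg := Matrix.diagonal (fun m : Fin n => ((2 * cval n m : ℝ) : ℂ)) with hDg
  have hSpec : shiftMatrix n + (shiftMatrix n)ᴴ = Vmat n * Dg * (Vmat n)ᴴ := by
    calc shiftMatrix n + (shiftMatrix n)ᴴ
        = (shiftMatrix n + (shiftMatrix n)ᴴ) * (Vmat n * (Vmat n)ᴴ) := by
          rw [hVVH, Matrix.mul_one]
      _ = ((shiftMatrix n + (shiftMatrix n)ᴴ) * Vmat n) * (Vmat n)ᴴ := by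
          rw [Matrix.mul_assoc]
      _ = (Vmat n * Dg) * (Vmat n)ᴴ := by rw [eig_eq]
  have hdotV : ∀ B : Matrix (Fin n) (Fin n) ℂ,
      star x ⬝ᵥ ((Vmat n * B * (Vmat n)ᴴ).mulVec x) = star y ⬝ᵥ (B.mulVec y) := by
    intro B
    calc star x ⬝ᵥ ((Vmat n * B * (Vmat n)ᴴ).mulVec x)
        = star x ⬝ᵥ ((Vmat n * (B * (Vmat n)ᴴ)).mulVec x) := by rw [Matrix.mul_assoc]
      _ = star x ⬝ᵥ (Vmat n).mulVec ((B * (Vmat n)ᴴ).mulVec x) := by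
          rw [Matrix.mulVec_mulVec]
      _ = (star x ᵥ* Vmat n) ⬝ᵥ ((B * (Vmat n)ᴴ).mulVec x) :=
          Matrix.dotProduct_mulVec _ _ _
      _ = star y ⬝ᵥ ((B * (Vmat n)ᴴ).mulVec x) := by
          rw [hy, Matrix.star_mulVec, Matrix.conjTranspose_conjTranspose]
      _ = star y ⬝ᵥ (B.mulVec y) := by rw [← Matrix.mulVec_mulVec, hy]
  set q : Fin n → ℝ := fun m => Complex.normSq (y m) with hq
  have hyq : star y ⬝ᵥ (Dg.mulVec y) = ((∑ m, 2 * cval n m * q m : ℝ) : ℂ) := by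
    rw [dotProduct, Complex.ofReal_sum]
    apply Finset.sum_congr rfl
    intro m _
    rw [Matrix.mulVec_diagonal, hq, Pi.star_apply]
    rw [show star (y m) * (((2 * cval n m : ℝ) : ℂ) * y m)
        = ((2 * cval n m : ℝ) : ℂ) * (y m * (starRingEnd ℂ) (y m)) by
      rw [starRingEnd_apply]; ring]
    rw [Complex.mul_conj]
    push_cast
    ring
  have hyy : star y ⬝ᵥ y = ((∑ m, q m : ℝ) : ℂ) := by
    rw [dotProduct, Complex.ofReal_sum]
    apply Finset.sum_congr rfl
    intro m _
    rw [hq, Pi.star_apply]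
    rw [show star (y m) * y m = y m * (starRingEnd ℂ) (y m) by rw [starRingEnd_apply]; ring]
    rw [Complex.mul_conj]
  have hT : star x ⬝ᵥ x = ((∑ m, q m : ℝ) : ℂ) := by
    have h1 := hdotV 1
    rw [Matrix.mul_one, hVVH, Matrix.one_mulVec, Matrix.one_mulVec] at h1
    rw [h1, hyy]
  have hcomb : star x ⬝ᵥ ((shiftMatrix n + (shiftMatrix n)ᴴ).mulVec x)
      = ((∑ m, 2 * cval n m * q m : ℝ) : ℂ) := by
    rw [hSpec, hdotV, hyq]
  have hcomb2 : star x ⬝ᵥ ((shiftMatrix n + (shiftMatrix n)ᴴ).mulVec x)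
      = z * (star x ⬝ᵥ x) + star (z * (star x ⬝ᵥ x)) := by
    rw [Matrix.add_mulVec, dotProduct_add, hdot1, hdot2]
  set Tq : ℝ := ∑ m, q m with hTq
  have hreal : 2 * (z.re * Tq) = ∑ m, 2 * cval n m * q m := by
    have h3 : z * ((Tq : ℝ) : ℂ) + star (z * ((Tq : ℝ) : ℂ))
        = ((∑ m, 2 * cval n m * q m : ℝ) : ℂ) := by
      rw [← hT, ← hcomb2]
      exact hcomb
    rw [← starRingEnd_apply, Complex.add_conj] at h3
    have h4 : (z * ((Tq : ℝ) : ℂ)).re = z.re * Tq := by simp [Complex.mul_re]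
    rw [h4] at h3
    exact_mod_cast h3
  have hq0 : ∀ m, 0 ≤ q m := fun m => Complex.normSq_nonneg _
  have hyne : y ≠ 0 := by
    intro hy0'
    apply hxne
    have hx1 : x = (Vmat n * (Vmat n)ᴴ).mulVec x := by rw [hVVH, Matrix.one_mulVec]
    rw [hx1, ← Matrix.mulVec_mulVec, ← hy, hy0', Matrix.mulVec_zero]
  have hTqpos : 0 < Tq := by
    obtain ⟨m0, hm0⟩ : ∃ m, y m ≠ 0 := by
      by_contra hcon
      push_neg at hcon
      exact hyne (funext hcon)
    have hqm : 0 < q m0 := by rw [hq]; exact Complex.normSq_pos.mpr hm0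
    exact Finset.sum_pos' (fun m _ => hq0 m) ⟨m0, Finset.mem_univ m0, hqm⟩
  have hck : ∀ m : Fin n, 2 * cval n m * q m
      ≤ 2 * Real.cos ((k:ℝ) * Real.pi / ((n:ℝ) + 1)) * q m := by
    intro m
    rcases lt_or_ge (m : ℕ) (k - 1) with hm | hm
    · have hqz : q m = 0 := by
        show Complex.normSq (y m) = 0
        rw [hy0 m hm]; simp
      rw [hqz]; simp
    · have hcos : cval n m ≤ Real.cos ((k:ℝ) * Real.pi / ((n:ℝ) + 1)) := by
        rw [cval]
        apply Real.cos_le_cos_of_nonneg_of_le_pi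
        · positivity
        · rw [div_le_iff₀ hn1]
          have hm1 : ((m:ℕ) + 1 : ℝ) ≤ (n:ℝ) := by exact_mod_cast m.isLt
          nlinarith
        · have hkm : (k : ℝ) ≤ ((m:ℕ) + 1 : ℝ) := by
            have hk' : k ≤ (m:ℕ) + 1 := by omega
            exact_mod_cast hk'
          gcongr
      nlinarith [hq0 m]
  have hsum_le : ∑ m, 2 * cval n m * q m
      ≤ 2 * Real.cos ((k:ℝ) * Real.pi / ((n:ℝ) + 1)) * Tq := by
    rw [hTq, Finset.mul_sum]
    exact Finset.sum_le_sum fun m _ => hck m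
  nlinarith [hreal, hsum_le, hTqpos]

end ShiftAux

open Real in
theorem rankNumRange_shiftMatrix_eq_closedDisc
    (n k : ℕ) (hn : 2 ≤ n) (hk1 : 1 ≤ k) (hk2 : k ≤ (n + 1) / 2) :
    rankNumRange k (shiftMatrix n) =
      {z : ℂ | ‖z‖ ≤ cos (k * π / (n + 1))} := by
  have h2k : 2 * k ≤ n + 1 := by omega
  ext z
  simp only [Set.mem_setOf_eq]
  constructor
  · intro hz
    have h1 := ShiftAux.rot_mem (-(z.arg)) hz
    have h2 : Complex.exp (((-(z.arg) : ℝ) : ℂ) * Complex.I) * z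
        = ((‖z‖ : ℝ) : ℂ) := by
      calc Complex.exp (((-(z.arg) : ℝ) : ℂ) * Complex.I) * z
          = Complex.exp (((-(z.arg) : ℝ) : ℂ) * Complex.I)
            * (((‖z‖ : ℝ) : ℂ) * Complex.exp ((z.arg : ℂ) * Complex.I)) := by
            rw [Complex.norm_mul_exp_arg_mul_I]
        _ = ((‖z‖ : ℝ) : ℂ)
            * Complex.exp (((-(z.arg) : ℝ) : ℂ) * Complex.I + (z.arg : ℂ) * Complex.I) := by
            rw [Complex.exp_add]; ring
        _ = ((‖z‖ : ℝ) : ℂ) := by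
            rw [show ((-(z.arg) : ℝ) : ℂ) * Complex.I + (z.arg : ℂ) * Complex.I = 0 by
              push_cast; ring, Complex.exp_zero, mul_one]
    rw [h2] at h1
    have h4 := ShiftAux.re_le_of_mem hk1 h2k h1
    simpa using h4
  · intro hz
    rcases eq_or_ne z 0 with rfl | hz0
    · simpa using ShiftAux.zero_mem hk1 h2k
    · have hr : 0 < ‖z‖ := norm_pos_iff.mpr hz0
      have hmem := ShiftAux.pos_mem hk1 h2k (‖z‖) hr hz
      have h1 := ShiftAux.rot_mem z.arg hmem
      rw [mul_comm, Complex.norm_mul_exp_arg_mul_I] at h1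
      exact h1
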